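/- (Core criterion.) Let T be a closed semiregular operator in a Hilbert C*-module E over A and let 𝓔 ⊆ dom(T) be an A-submodule. Then 𝓔 is a core for T (i.e. dense in dom(T) with respect to the graph norm) if and only if for every state ω on A the subspace ι_ω(𝓔) is a core for the localized operator T^ω in the Hilbert space E^ω. -/

import Mathlib

open scoped ComplexOrder RightActions InnerProductSpace
open CStarModule

noncomputable section

/-- The Hilbert C⋆-module class of the older Mathlib (right `A`-modules via `SMul Aᵐᵒᵖ E`),
kept here because Mathlib's `CStarModule` now uses left modules. -/
class RightCStarModule (A : outParam <| Type*) (E : Type*) [NonUnitalSemiring A] [StarRing A]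
    [Module ℂ A] [AddCommGroup E] [Module ℂ E] [PartialOrder A] [SMul Aᵐᵒᵖ E] [Norm A] [Norm E]
    extends Inner A E where
  inner_add_right {x} {y} {z} : inner x (y + z) = inner x y + inner x z
  inner_self_nonneg {x} : 0 ≤ inner x x
  inner_self {x} : inner x x = 0 ↔ x = 0
  inner_op_smul_right {a : A} {x y : E} : inner x (y <• a) = inner x y * a
  inner_smul_right_complex {z : ℂ} {x} {y} : inner x (z • y) = z • inner x y
  star_inner x y : star (inner x y) = inner y x
  norm_eq_sqrt_norm_inner_self x : ‖x‖ = √‖inner x x‖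

/-- An unbounded operator in a Hilbert C⋆-module `E`: a `ℂ`-linear map defined on a
`ℂ`-submodule of `E`. -/
structure UnboundedOperator (E : Type*) [NormedAddCommGroup E] [Module ℂ E] where
  dom : Submodule ℂ E
  toFun : dom →ₗ[ℂ] E

namespace UnboundedOperator

variable {A E : Type*} [CStarAlgebra A] [PartialOrder A] [StarOrderedRing A]
  [NormedAddCommGroup E] [Module ℂ E] [SMul Aᵐᵒᵖ E] [RightCStarModule A E]

/-- `y` and `z` satisfy the adjoint relation for `T`: `⟪Tx, y⟫ = ⟪x, z⟫` for all `x ∈ dom T`. -/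
def AdjRel (T : UnboundedOperator E) (y z : E) : Prop :=
  ∀ x : T.dom, ⟪T.toFun x, y⟫_A = ⟪(x : E), z⟫_A

/-- The domain of the adjoint of `T`. -/
def adjDom (T : UnboundedOperator E) : Set E := {y | ∃ z, T.AdjRel (A := A) y z}

/-- `T` is semiregular: both `T` and its adjoint are densely defined. -/
def Semiregular (T : UnboundedOperator E) : Prop :=
  Dense (T.dom : Set E) ∧ Dense (T.adjDom (A := A))

/-- The graph of `T` as a subset of `E × E`. -/
def graph (T : UnboundedOperator E) : Set (E × E) :=
  {p | ∃ x : T.dom, p = ((x : E), T.toFun x)}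

/-- `T` is a closed operator. -/
def IsClosedOp (T : UnboundedOperator E) : Prop := IsClosed T.graph

/-- `S` is the adjoint of `T`. -/
def IsAdjointOf (S T : UnboundedOperator E) : Prop :=
  (S.dom : Set E) = T.adjDom (A := A) ∧ ∀ y : S.dom, T.AdjRel (A := A) (y : E) (S.toFun y)

/-- `T` is symmetric. -/
def Symmetric (T : UnboundedOperator E) : Prop :=
  ∀ x y : T.dom, ⟪T.toFun x, (y : E)⟫_A = ⟪(x : E), T.toFun y⟫_A

/-- `T` is selfadjoint: it is its own adjoint. -/
def SelfAdjointOp (T : UnboundedOperator E) : Prop := IsAdjointOf (A := A) T T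

/-- The range of `I + S ∘ T` (for `S` the adjoint of `T` this is the range of `I + T⋆T`). -/
def ranIdAddMul (S T : UnboundedOperator E) : Set E :=
  {y | ∃ (x : T.dom) (hx : T.toFun x ∈ S.dom), y = (x : E) + S.toFun ⟨T.toFun x, hx⟩}

/-- `T` is regular: it is closed, semiregular, and `I + T⋆T` has dense range. -/
def Regular (T : UnboundedOperator E) : Prop :=
  T.IsClosedOp ∧ T.Semiregular (A := A) ∧
    ∀ S : UnboundedOperator E, IsAdjointOf (A := A) S T → Dense (ranIdAddMul S T)

/-- `Tc` is the closure of `T`: its graph is the closure of the graph of `T`. -/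
def IsClosureOf (Tc T : UnboundedOperator E) : Prop :=
  Tc.graph = closure T.graph

end UnboundedOperator

/-- A state on a C⋆-algebra: a positive continuous linear functional of norm one. -/
structure CStarState (A : Type*) [CStarAlgebra A] [PartialOrder A] where
  toFun : A →L[ℂ] ℂ
  pos : ∀ a : A, 0 ≤ a → 0 ≤ toFun a
  norm_one : ‖toFun‖ = 1

namespace CStarState

variable {A E : Type*} [CStarAlgebra A] [PartialOrder A] [StarOrderedRing A]
  [NormedAddCommGroup E] [Module ℂ E] [SMul Aᵐᵒᵖ E] [RightCStarModule A E]

/-- A pure state: an extreme point of the state space. -/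
def IsPure (ω : CStarState A) : Prop :=
  ∀ (φ ψ : CStarState A) (t : ℝ), 0 < t → t < 1 →
    (∀ a : A, ω.toFun a = (t : ℂ) * φ.toFun a + ((1 - t : ℝ) : ℂ) * ψ.toFun a) →
    φ.toFun = ω.toFun ∧ ψ.toFun = ω.toFun

/-- The squared seminorm on `E` induced by the state `ω`: the squared norm of the image
of `x` in the localization Hilbert space `E^ω`. -/
def locSq (ω : CStarState A) (x : E) : ℝ := (ω.toFun (⟪x, x⟫_A : A)).re

end CStarState

namespace RightCStarModule

variable {A E : Type*} [CStarAlgebra A] [PartialOrder A] [StarOrderedRing A]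
  [NormedAddCommGroup E] [Module ℂ E] [SMul Aᵐᵒᵖ E] [RightCStarModule A E]

lemma inner_add_left' {x y z : E} : ⟪x + y, z⟫_A = ⟪x, z⟫_A + ⟪y, z⟫_A := by
  rw [← star_inner z, RightCStarModule.inner_add_right, star_add, star_inner, star_inner]

lemma inner_neg_right' {x y : E} : ⟪x, -y⟫_A = -⟪x, y⟫_A := by
  rw [← neg_one_smul ℂ y, RightCStarModule.inner_smul_right_complex, neg_one_smul]

lemma inner_sub_right' {x y z : E} : ⟪x, y - z⟫_A = ⟪x, y⟫_A - ⟪x, z⟫_A := by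
  rw [sub_eq_add_neg, RightCStarModule.inner_add_right, inner_neg_right', ← sub_eq_add_neg]

lemma inner_sub_left' {x y z : E} : ⟪x - y, z⟫_A = ⟪x, z⟫_A - ⟪y, z⟫_A := by
  rw [← star_inner z, inner_sub_right', star_sub, star_inner, star_inner]

lemma inner_smul_right_real' {r : ℝ} {x y : E} : ⟪x, r • y⟫_A = r • ⟪x, y⟫_A := by
  rw [← Complex.coe_smul, RightCStarModule.inner_smul_right_complex, Complex.coe_smul]

lemma inner_smul_left_real' {r : ℝ} {x y : E} : ⟪r • x, y⟫_A = r • ⟪x, y⟫_A := by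
  rw [← star_inner y, inner_smul_right_real', ← Complex.coe_smul, star_smul, star_inner,
    Complex.star_def, Complex.conj_ofReal, Complex.coe_smul]

lemma norm_sq_eq' {x : E} : ‖x‖ ^ 2 = ‖⟪x, x⟫_A‖ := by
  rw [RightCStarModule.norm_eq_sqrt_norm_inner_self x, Real.sq_sqrt (norm_nonneg _)]

end RightCStarModule

open scoped Pointwise

section MainHelpers

variable {A E : Type*} [CStarAlgebra A] [PartialOrder A] [StarOrderedRing A]
  [NormedAddCommGroup E] [Module ℂ E] [SMul Aᵐᵒᵖ E] [RightCStarModule A E]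

private lemma jensen2 (z z' : E) {t s : ℝ} (ht : 0 ≤ t) (hs : 0 ≤ s) (hts : t + s = 1) :
    (⟪t • z + s • z', t • z + s • z'⟫_A) ≤ t • ⟪z, z⟫_A + s • ⟪z', z'⟫_A := by
  have hs' : s = 1 - t := by linarith
  subst hs'
  rw [← sub_nonneg]
  have key : t • ⟪z, z⟫_A + (1-t) • ⟪z', z'⟫_A
        - ⟪t • z + (1-t) • z', t • z + (1-t) • z'⟫_A
      = (t*(1-t)) • ⟪z - z', z - z'⟫_A := by
    simp only [RightCStarModule.inner_sub_left', RightCStarModule.inner_sub_right',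
      RightCStarModule.inner_add_left', RightCStarModule.inner_add_right,
      RightCStarModule.inner_smul_left_real', RightCStarModule.inner_smul_right_real', smul_sub, smul_smul]
    module
  rw [key]
  exact smul_nonneg (by nlinarith) RightCStarModule.inner_self_nonneg

end MainHelpers

section StateHelpers

variable {A : Type*} [CStarAlgebra A] [PartialOrder A] [StarOrderedRing A]

private def reL (A : Type*) [CStarAlgebra A] : A →ₗ[ℝ] A where
  toFun a := (2:ℝ)⁻¹ • (a + star a)
  map_add' a b := by
    simp only [star_add]
    rw [← smul_add]
    congr 1
    abel
  map_smul' t a := by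
    show (2:ℝ)⁻¹ • (t • a + star (t • a)) = t • ((2:ℝ)⁻¹ • (a + star a))
    have h1 : (t • a : A) = (t : ℂ) • a := by simp
    have h2 : star ((t:ℂ) • a) = (t:ℂ) • star a := by rw [star_smul]; simp
    rw [h1, h2, ← smul_add, smul_comm]
    simp

private lemma reL_sa {a : A} (ha : IsSelfAdjoint a) : reL A a = a := by
  simp only [reL, LinearMap.coe_mk, AddHom.coe_mk, ha.star_eq]
  rw [← two_smul ℝ a, smul_smul]
  norm_num

private lemma reL_I_sa {a : A} (ha : IsSelfAdjoint a) : reL A (Complex.I • a) = 0 := by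
  simp only [reL, LinearMap.coe_mk, AddHom.coe_mk]
  rw [star_smul, Complex.star_def, Complex.conj_I, ha.star_eq, neg_smul, add_neg_cancel, smul_zero]

private lemma reL_star (a : A) : reL A (star a) = reL A a := by
  simp only [reL, LinearMap.coe_mk, AddHom.coe_mk, star_star]
  rw [add_comm]

private lemma reL_I_star (a : A) : reL A (Complex.I • star a) = - reL A (Complex.I • a) := by
  simp only [reL, LinearMap.coe_mk, AddHom.coe_mk]
  have h1 : star (Complex.I • star a) = -(Complex.I • a) := by
    rw [star_smul, Complex.star_def, Complex.conj_I, star_star, neg_smul]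
  have h2 : star (Complex.I • a) = -(Complex.I • star a) := by
    rw [star_smul, Complex.star_def, Complex.conj_I, neg_smul]
  rw [h1, h2]
  module

private lemma exists_state (f : A →L[ℝ] ℝ) (hpos : ∀ c : A, 0 ≤ c → 0 ≤ f c)
    (hf1 : 0 < f 1) :
    ∃ ω : CStarState A, ∀ a : A, 0 ≤ a → ω.toFun a = (((f 1)⁻¹ * f a : ℝ) : ℂ) := by
  have hmono : ∀ c d : A, c ≤ d → f c ≤ f d := by
    intro c d h
    have h1 := hpos (d - c) (sub_nonneg.mpr h)
    rw [map_sub] at h1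
    linarith
  set g : A →ₗ[ℝ] ℝ := (f : A →ₗ[ℝ] ℝ).comp (reL A) with hg
  have hg_apply : ∀ a : A, g a = f (reL A a) := fun a => rfl
  set φ : A →ₗ[ℂ] ℂ := g.extendTo𝕜' with hφdef
  have hφ_apply : ∀ a : A, φ a = (g a : ℂ) - Complex.I * (g (Complex.I • a) : ℂ) := by
    intro a
    exact g.extendTo𝕜'_apply (𝕜 := ℂ) a
  have hφ_sa : ∀ a : A, IsSelfAdjoint a → φ a = (f a : ℂ) := by
    intro a ha
    rw [hφ_apply, hg_apply, hg_apply, reL_sa ha, reL_I_sa ha]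
    simp
  have hφ_star : ∀ a : A, φ (star a) = starRingEnd ℂ (φ a) := by
    intro a
    rw [hφ_apply, hφ_apply, hg_apply, hg_apply, hg_apply, hg_apply, reL_star, reL_I_star,
      map_neg]
    simp [Complex.ext_iff]
  have hφ_pos : ∀ a : A, 0 ≤ a → φ a = (f a : ℂ) := fun a ha =>
    hφ_sa a (IsSelfAdjoint.of_nonneg ha)
  letI core : PreInnerProductSpace.Core ℂ A :=
  { inner := fun a b => φ (star a * b)
    conj_inner_symm := fun a b => by
      show starRingEnd ℂ (φ (star b * a)) = φ (star a * b)
      rw [← hφ_star (star b * a), star_mul, star_star]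
    re_inner_nonneg := fun a => by
      show 0 ≤ RCLike.re (φ (star a * a))
      rw [hφ_pos _ (star_mul_self_nonneg a)]
      simpa using hpos _ (star_mul_self_nonneg a)
    add_left := fun a b c => by
      show φ (star (a + b) * c) = φ (star a * c) + φ (star b * c)
      rw [star_add, add_mul, map_add]
    smul_left := fun a b r => by
      show φ (star (r • a) * b) = starRingEnd ℂ r * φ (star a * b)
      rw [star_smul, smul_mul_assoc, map_smul, smul_eq_mul, Complex.star_def] }
  letI : Inner ℂ A := InnerProductSpace.Core.toPreInner'
  have hCS : ∀ a : A, ‖φ a‖ * ‖φ a‖ ≤ f 1 * f (star a * a) := by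
    intro a
    have h := InnerProductSpace.Core.inner_mul_inner_self_le (𝕜 := ℂ) (F := A) 1 a
    have e1 : (inner (𝕜 := ℂ) (1:A) a) = φ a := by
      show φ (star 1 * a) = φ a
      rw [star_one, one_mul]
    have e2 : (inner (𝕜 := ℂ) a (1:A)) = starRingEnd ℂ (φ a) := by
      show φ (star a * 1) = _
      rw [mul_one, hφ_star]
    have e3 : (inner (𝕜 := ℂ) (1:A) 1) = ((f 1 : ℝ) : ℂ) := by
      show φ (star 1 * 1) = _
      rw [star_one, one_mul]
      exact hφ_sa 1 (IsSelfAdjoint.one A)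
    have e4 : (inner (𝕜 := ℂ) a a) = ((f (star a * a) : ℝ) : ℂ) :=
      hφ_pos _ (star_mul_self_nonneg a)
    rw [e1, e2, e3, e4] at h
    simpa [RCLike.norm_conj] using h
  have hb : ∀ a : A, ‖φ a‖ ≤ f 1 * ‖a‖ := by
    intro a
    have h1 := hCS a
    have h3 : star a * a ≤ algebraMap ℝ A ‖star a * a‖ :=
      IsSelfAdjoint.le_algebraMap_norm_self (IsSelfAdjoint.of_nonneg (star_mul_self_nonneg a))
    have h4 := hmono _ _ h3
    rw [Algebra.algebraMap_eq_smul_one, map_smul, smul_eq_mul, CStarRing.norm_star_mul_self] at h4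
    have h5 : f 1 * f (star a * a) ≤ f 1 * (‖a‖ * ‖a‖ * f 1) :=
      mul_le_mul_of_nonneg_left h4 hf1.le
    nlinarith [norm_nonneg (φ a), norm_nonneg a, mul_nonneg hf1.le (norm_nonneg a)]
  set φC : A →L[ℂ] ℂ := φ.mkContinuous (f 1) hb with hφC
  set ω : A →L[ℂ] ℂ := (f 1)⁻¹ • φC with hω
  have hωa : ∀ a : A, ω a = (f 1)⁻¹ • φ a := fun a => rfl
  have hωr : ∀ a : A, 0 ≤ a → ω a = (((f 1)⁻¹ * f a : ℝ) : ℂ) := by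
    intro a ha
    rw [hωa, hφ_pos a ha, Complex.real_smul]
    push_cast
    ring
  refine ⟨⟨ω, ?_, ?_⟩, hωr⟩
  · intro a ha
    rw [hωr a ha]
    have : (0:ℝ) ≤ (f 1)⁻¹ * f a := mul_nonneg (inv_nonneg.mpr hf1.le) (hpos a ha)
    exact_mod_cast Complex.zero_le_real.mpr this
  · refine le_antisymm ?_ ?_
    · refine ContinuousLinearMap.opNorm_le_bound _ zero_le_one fun a => ?_
      have h5 : ‖ω a‖ = (f 1)⁻¹ * ‖φ a‖ := by
        rw [hωa, norm_smul, Real.norm_eq_abs, abs_of_nonneg (inv_nonneg.mpr hf1.le)]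
      rw [h5, one_mul]
      calc (f 1)⁻¹ * ‖φ a‖ ≤ (f 1)⁻¹ * (f 1 * ‖a‖) :=
            mul_le_mul_of_nonneg_left (hb a) (inv_nonneg.mpr hf1.le)
        _ = ‖a‖ := by field_simp
    · have h1 : ω 1 = 1 := by
        rw [hωa, hφ_sa 1 (IsSelfAdjoint.one A), Complex.real_smul]
        rw [← Complex.ofReal_mul, inv_mul_cancel₀ hf1.ne']
        norm_num
      haveI : Nontrivial A := by
        refine ⟨⟨1, 0, fun h => ?_⟩⟩
        rw [h, map_zero] at hf1
        exact lt_irrefl 0 hf1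
      have h2 := ω.le_opNorm 1
      rw [h1, norm_one, norm_one, mul_one] at h2
      exact h2

end StateHelpers


/-- **Core criterion.** Let `T` be a closed semiregular operator in a Hilbert C⋆-module `E`
over `A` and let `𝓔 ⊆ dom T` be a submodule. Then `𝓔` is a core for `T` (dense in `dom T`
for the graph norm) if and only if for every state `ω` on `A` the image `ι_ω(𝓔)` is a core
for the localized operator `T^ω` in the Hilbert space `E^ω` (i.e. `ι_ω(𝓔)` is dense in
`ι_ω(dom T)` for the graph seminorm induced by `ω`). -/
theorem core_criterion
    {A E : Type*} [CStarAlgebra A] [PartialOrder A] [StarOrderedRing A]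
    [NormedAddCommGroup E] [Module ℂ E] [SMul Aᵐᵒᵖ E] [RightCStarModule A E]
    (T : UnboundedOperator E) (hclosed : T.IsClosedOp) (hsemi : T.Semiregular (A := A))
    (𝓔 : Submodule ℂ E) (hsub : ∀ y ∈ 𝓔, y ∈ T.dom) :
    (∀ (x : T.dom) (ε : ℝ), 0 < ε → ∃ (y : E) (hy : y ∈ 𝓔),
        ‖(x : E) - y‖ ^ 2 + ‖T.toFun x - T.toFun ⟨y, hsub y hy⟩‖ ^ 2 < ε)
    ↔ (∀ (ω : CStarState A) (x : T.dom) (ε : ℝ), 0 < ε → ∃ (y : E) (hy : y ∈ 𝓔),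
        ω.locSq ((x : E) - y) + ω.locSq (T.toFun x - T.toFun ⟨y, hsub y hy⟩) < ε) := by
  constructor
  · -- forward direction
    intro h ω x ε hε
    obtain ⟨y, hy, hlt⟩ := h x ε hε
    refine ⟨y, hy, ?_⟩
    have key : ∀ z : E, ω.locSq z ≤ ‖z‖ ^ 2 := by
      intro z
      have h1 : (ω.toFun ⟪z, z⟫_A).re ≤ ‖ω.toFun ⟪z, z⟫_A‖ := by
        simpa using Complex.re_le_norm (ω.toFun ⟪z, z⟫_A)
      have h2 : ‖ω.toFun ⟪z, z⟫_A‖ ≤ ‖ω.toFun‖ * ‖⟪z, z⟫_A‖ := ω.toFun.le_opNorm _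
      rw [ω.norm_one, one_mul, ← RightCStarModule.norm_sq_eq'] at h2
      exact h1.trans h2
    calc ω.locSq ((x : E) - y) + ω.locSq (T.toFun x - T.toFun ⟨y, hsub y hy⟩)
        ≤ ‖(x : E) - y‖ ^ 2 + ‖T.toFun x - T.toFun ⟨y, hsub y hy⟩‖ ^ 2 :=
          add_le_add (key _) (key _)
      _ < ε := hlt
  · -- backward direction
    intro H x ε hε
    by_contra hcon
    push_neg at hcon
    -- hcon : ∀ y (hy : y ∈ 𝓔), ε ≤ ‖x - y‖^2 + ‖Tx - Ty‖^2
    set Av : (y : E) → y ∈ 𝓔 → A := fun y hy =>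
      ⟪(x:E) - y, (x:E) - y⟫_A +
        ⟪T.toFun x - T.toFun ⟨y, hsub y hy⟩, T.toFun x - T.toFun ⟨y, hsub y hy⟩⟫_A with hAv
    have hAv_nonneg : ∀ (y : E) (hy : y ∈ 𝓔), (0 : A) ≤ Av y hy := fun y hy =>
      add_nonneg RightCStarModule.inner_self_nonneg RightCStarModule.inner_self_nonneg
    have hAv_sa : ∀ (y : E) (hy : y ∈ 𝓔), IsSelfAdjoint (Av y hy) := fun y hy =>
      IsSelfAdjoint.of_nonneg (hAv_nonneg y hy)
    have hAv_norm : ∀ (y : E) (hy : y ∈ 𝓔), ε / 2 ≤ ‖Av y hy‖ := by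
      intro y hy
      have h1 : ‖(x:E) - y‖^2 ≤ ‖Av y hy‖ := by
        rw [RightCStarModule.norm_sq_eq']
        exact CStarAlgebra.norm_le_norm_of_nonneg_of_le RightCStarModule.inner_self_nonneg
          (le_add_of_nonneg_right RightCStarModule.inner_self_nonneg)
      have h2 : ‖T.toFun x - T.toFun ⟨y, hsub y hy⟩‖^2 ≤ ‖Av y hy‖ := by
        rw [RightCStarModule.norm_sq_eq']
        exact CStarAlgebra.norm_le_norm_of_nonneg_of_le RightCStarModule.inner_self_nonneg
          (le_add_of_nonneg_left RightCStarModule.inner_self_nonneg)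
      have h3 := hcon y hy
      linarith
    -- the two convex sets
    set U : Set A := -{c : A | 0 ≤ c} + Metric.ball (0:A) (ε/2) with hU
    set K : Set A := {a : A | ∃ (y : E) (hy : y ∈ 𝓔), Av y hy ≤ a} with hK
    have hCconv : Convex ℝ {c : A | 0 ≤ c} := fun c1 h1 c2 h2 t s ht hs hts =>
      add_nonneg (smul_nonneg ht h1) (smul_nonneg hs h2)
    have hUopen : IsOpen U := Metric.isOpen_ball.add_left
    have hUconv : Convex ℝ U := Convex.add hCconv.neg (convex_ball 0 (ε/2))
    have hKconv : Convex ℝ K := by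
      rintro a1 ⟨y1, hy1, hA1⟩ a2 ⟨y2, hy2, hA2⟩ t s ht hs hts
      have hy' : (t:ℂ) • y1 + (s:ℂ) • y2 ∈ 𝓔 :=
        Submodule.add_mem _ (Submodule.smul_mem _ _ hy1) (Submodule.smul_mem _ _ hy2)
      refine ⟨(t:ℂ) • y1 + (s:ℂ) • y2, hy', ?_⟩
      have hts' : (t:ℂ) + (s:ℂ) = 1 := by
        rw [← Complex.ofReal_add, hts, Complex.ofReal_one]
      have hsm : ∀ (r : ℝ) (v : E), r • v = (r:ℂ) • v := fun r v => by simp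
      have hz : (x:E) - ((t:ℂ) • y1 + (s:ℂ) • y2)
          = t • ((x:E) - y1) + s • ((x:E) - y2) := by
        rw [hsm, hsm, smul_sub, smul_sub]
        have hx1 : (t:ℂ) • (x:E) + (s:ℂ) • (x:E) = (x:E) := by
          rw [← add_smul, hts', one_smul]
        calc (x:E) - ((t:ℂ) • y1 + (s:ℂ) • y2)
            = ((t:ℂ) • (x:E) + (s:ℂ) • (x:E)) - ((t:ℂ) • y1 + (s:ℂ) • y2) := by rw [hx1]
          _ = ((t:ℂ) • (x:E) - (t:ℂ) • y1) + ((s:ℂ) • (x:E) - (s:ℂ) • y2) := by abel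
      have hTy : T.toFun ⟨(t:ℂ) • y1 + (s:ℂ) • y2, hsub _ hy'⟩
          = (t:ℂ) • T.toFun ⟨y1, hsub y1 hy1⟩ + (s:ℂ) • T.toFun ⟨y2, hsub y2 hy2⟩ := by
        have hsub' : (⟨(t:ℂ) • y1 + (s:ℂ) • y2, hsub _ hy'⟩ : T.dom)
            = (t:ℂ) • (⟨y1, hsub y1 hy1⟩ : T.dom) + (s:ℂ) • (⟨y2, hsub y2 hy2⟩ : T.dom) := by
          apply Subtype.ext
          rfl
        rw [hsub', map_add, map_smul, map_smul]
      have hw : T.toFun x - T.toFun ⟨(t:ℂ) • y1 + (s:ℂ) • y2, hsub _ hy'⟩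
          = t • (T.toFun x - T.toFun ⟨y1, hsub y1 hy1⟩)
            + s • (T.toFun x - T.toFun ⟨y2, hsub y2 hy2⟩) := by
        rw [hTy, hsm, hsm, smul_sub, smul_sub]
        have hx1 : (t:ℂ) • T.toFun x + (s:ℂ) • T.toFun x = T.toFun x := by
          rw [← add_smul, hts', one_smul]
        calc T.toFun x - ((t:ℂ) • T.toFun ⟨y1, hsub y1 hy1⟩ + (s:ℂ) • T.toFun ⟨y2, hsub y2 hy2⟩)
            = ((t:ℂ) • T.toFun x + (s:ℂ) • T.toFun x)
              - ((t:ℂ) • T.toFun ⟨y1, hsub y1 hy1⟩ + (s:ℂ) • T.toFun ⟨y2, hsub y2 hy2⟩) := by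
              rw [hx1]
          _ = _ := by abel
      have hj1 := jensen2 (A := A) ((x:E) - y1) ((x:E) - y2) ht hs hts
      have hj2 := jensen2 (A := A) (T.toFun x - T.toFun ⟨y1, hsub y1 hy1⟩)
        (T.toFun x - T.toFun ⟨y2, hsub y2 hy2⟩) ht hs hts
      have hmid : Av _ hy' ≤ t • Av y1 hy1 + s • Av y2 hy2 := by
        rw [hAv]
        simp only [smul_add]
        rw [hz, hw]
        have := add_le_add hj1 hj2
        calc ⟪t • ((x:E) - y1) + s • ((x:E) - y2), t • ((x:E) - y1) + s • ((x:E) - y2)⟫_A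
              + ⟪t • (T.toFun x - T.toFun ⟨y1, hsub y1 hy1⟩)
                  + s • (T.toFun x - T.toFun ⟨y2, hsub y2 hy2⟩),
                 t • (T.toFun x - T.toFun ⟨y1, hsub y1 hy1⟩)
                  + s • (T.toFun x - T.toFun ⟨y2, hsub y2 hy2⟩)⟫_A
            ≤ (t • ⟪(x:E) - y1, (x:E) - y1⟫_A + s • ⟪(x:E) - y2, (x:E) - y2⟫_A)
              + (t • ⟪T.toFun x - T.toFun ⟨y1, hsub y1 hy1⟩,
                      T.toFun x - T.toFun ⟨y1, hsub y1 hy1⟩⟫_A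
                 + s • ⟪T.toFun x - T.toFun ⟨y2, hsub y2 hy2⟩,
                        T.toFun x - T.toFun ⟨y2, hsub y2 hy2⟩⟫_A) := this
          _ = _ := by abel
      refine hmid.trans ?_
      exact add_le_add (smul_le_smul_of_nonneg_left hA1 ht)
        (smul_le_smul_of_nonneg_left hA2 hs)
    have hdisj : Disjoint U K := by
      rw [Set.disjoint_left]
      rintro a ha ⟨y, hy, hA⟩
      obtain ⟨nc, hnc, d, hd, rfl⟩ := ha
      rw [Set.mem_neg] at hnc
      rw [Metric.mem_ball, dist_zero_right] at hd
      have h1 : Av y hy ≤ d := by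
        calc Av y hy ≤ Av y hy + (-nc) := le_add_of_nonneg_right hnc
          _ ≤ (nc + d) + (-nc) := add_le_add hA le_rfl
          _ = d := by abel
      have h2 : ‖Av y hy‖ ≤ ‖d‖ :=
        CStarAlgebra.norm_le_norm_of_nonneg_of_le (hAv_nonneg y hy) h1
      have h3 := hAv_norm y hy
      linarith
    obtain ⟨f, u, hfU, hfK⟩ := geometric_hahn_banach_open hUconv hUopen hKconv hdisj
    have h0U : (0:A) ∈ U := by
      refine ⟨0, ?_, 0, ?_, by simp⟩
      · rw [Set.mem_neg]; simp
      · simp [Metric.mem_ball, half_pos hε]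
    have hu0 : 0 < u := by simpa using hfU 0 h0U
    have hfpos : ∀ c : A, 0 ≤ c → 0 ≤ f c := by
      intro c hc
      by_contra hneg
      push_neg at hneg
      obtain ⟨n, hn⟩ := exists_nat_gt (u / (-f c))
      have hmem : -((n+1) • c) ∈ U := by
        refine ⟨-((n+1) • c), ?_, 0, ?_, by simp⟩
        · rw [Set.mem_neg, neg_neg]
          exact Set.mem_setOf.mpr (nsmul_nonneg hc (n+1))
        · simp [Metric.mem_ball, half_pos hε]
      have h4 := hfU _ hmem
      rw [map_neg, map_nsmul] at h4
      have h5 : (0:ℝ) < -f c := by linarith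
      have h6 : u / (-f c) < (n:ℝ) + 1 := by
        have : (n:ℝ) < (n:ℝ) + 1 := by linarith
        linarith
      rw [div_lt_iff₀ h5] at h6
      have h7 : -((n+1 : ℕ) • f c) = ((n:ℝ)+1) * (-f c) := by
        push_cast [nsmul_eq_mul]
        ring
      rw [h7] at h4
      linarith
    have hfmono : ∀ c d : A, c ≤ d → f c ≤ f d := by
      intro c d h
      have h1 := hfpos (d - c) (sub_nonneg.mpr h)
      rw [map_sub] at h1
      linarith
    have hf1 : 0 < f 1 := by
      rcases (hfpos 1 zero_le_one).lt_or_eq with h | h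
      · exact h
      · exfalso
        have hsa0 : ∀ b : A, IsSelfAdjoint b → f b = 0 := by
          intro b hb
          have hb1 := hfmono _ _ hb.le_algebraMap_norm_self
          have hb2 := hfmono _ _ (hb.neg.le_algebraMap_norm_self)
          rw [Algebra.algebraMap_eq_smul_one, map_smul, smul_eq_mul, ← h] at hb1
          rw [Algebra.algebraMap_eq_smul_one, map_smul, smul_eq_mul, ← h, map_neg] at hb2
          nlinarith
        have h0K : Av 0 (Submodule.zero_mem 𝓔) ∈ K := ⟨0, Submodule.zero_mem 𝓔, le_refl _⟩
        have := hfK _ h0K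
        rw [hsa0 _ (hAv_sa 0 (Submodule.zero_mem 𝓔))] at this
        linarith
    obtain ⟨ω, hωval⟩ := exists_state f hfpos hf1
    have hε0 : 0 < u / f 1 := div_pos hu0 hf1
    obtain ⟨y, hy, hlt⟩ := H ω x (u / f 1) hε0
    have hc1 : ω.locSq ((x:E) - y) = (f 1)⁻¹ * f ⟪(x:E) - y, (x:E) - y⟫_A := by
      show (ω.toFun _).re = _
      rw [hωval _ RightCStarModule.inner_self_nonneg]
      exact Complex.ofReal_re _
    have hc2 : ω.locSq (T.toFun x - T.toFun ⟨y, hsub y hy⟩)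
        = (f 1)⁻¹ * f ⟪T.toFun x - T.toFun ⟨y, hsub y hy⟩,
            T.toFun x - T.toFun ⟨y, hsub y hy⟩⟫_A := by
      show (ω.toFun _).re = _
      rw [hωval _ RightCStarModule.inner_self_nonneg]
      exact Complex.ofReal_re _
    have hKmem : Av y hy ∈ K := ⟨y, hy, le_refl _⟩
    have hfA := hfK _ hKmem
    have hsum : ω.locSq ((x:E) - y) + ω.locSq (T.toFun x - T.toFun ⟨y, hsub y hy⟩)
        = (f 1)⁻¹ * f (Av y hy) := by
      rw [hc1, hc2, hAv, map_add]
      ring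
    rw [hsum] at hlt
    have hfin : u / f 1 ≤ (f 1)⁻¹ * f (Av y hy) := by
      rw [div_eq_inv_mul]
      exact mul_le_mul_of_nonneg_left hfA (inv_nonneg.mpr hf1.le)
    linarith


end
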